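/- Division lemma in the noncommutative setting: Let A = M_n(ℤ_p), Â[t] the ring of power series over A with coefficients tending to 0 p-adically, X ∈ A, and M(t) ∈ Â[t]. Set g(t) = X + I_n t + p t² M(t). Then for every f(t) ∈ Â[t] there exist q(t) ∈ Â[t] and r ∈ A with f(t) = g(t)·q(t) + r. -/

import Mathlib

open Finset Filter

/-- A power series over `A = M_n(ℤ_p)` lies in `Â[t]`: its coefficients tend to `0`
`p`-adically, i.e. for every `k` all but finitely many coefficients are divisible
(entrywise) by `p^k`. -/
def MemAhat (p n : ℕ) [Fact p.Prime]
    (f : PowerSeries (Matrix (Fin n) (Fin n) ℤ_[p])) : Prop :=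
  ∀ k : ℕ, ∃ N : ℕ, ∀ l ≥ N, ∀ i j,
    (p : ℤ_[p]) ^ k ∣ (PowerSeries.coeff l f) i j

namespace Stmt18
variable {p n : ℕ} [hp : Fact p.Prime]
local notation "𝔸" => Matrix (Fin n) (Fin n) ℤ_[p]

private lemma pk_dvd_iff (k : ℕ) (x : ℤ_[p]) :
    (p : ℤ_[p]) ^ k ∣ x ↔ ‖x‖ ≤ (p : ℝ) ^ (-(k : ℤ)) := by
  rw [PadicInt.norm_le_pow_iff_mem_span_pow, Ideal.mem_span_singleton]

private lemma zero_of_forall_dvd {x : ℤ_[p]} (h : ∀ k : ℕ, (p : ℤ_[p]) ^ k ∣ x) : x = 0 := by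
  have hp1 : (1 : ℝ) < p := by exact_mod_cast hp.out.one_lt
  have h0 : Tendsto (fun k : ℕ => (p : ℝ) ^ (-(k : ℤ))) atTop (nhds 0) := by
    simp_rw [zpow_neg, zpow_natCast, ← inv_pow]
    exact tendsto_pow_atTop_nhds_zero_of_lt_one (by positivity)
      (by rw [inv_eq_one_div]; exact (div_lt_one (by positivity)).mpr hp1)
  have hx : ‖x‖ ≤ 0 :=
    ge_of_tendsto h0 (Filter.Eventually.of_forall fun k => (pk_dvd_iff k x).mp (h k))
  exact norm_le_zero_iff.mp hx

private lemma summable_of_decay {c : ℕ → ℤ_[p]}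
    (h : ∀ k : ℕ, ∃ N, ∀ m ≥ N, (p : ℤ_[p]) ^ k ∣ c m) : Summable c := by
  apply NonarchimedeanAddGroup.summable_of_tendsto_cofinite_zero
  rw [Nat.cofinite_eq_atTop, NormedAddCommGroup.tendsto_nhds_zero]
  intro ε hε
  have hp1 : (1 : ℝ) < p := by exact_mod_cast hp.out.one_lt
  obtain ⟨k, hk⟩ := exists_pow_lt_of_lt_one hε
    (show (p : ℝ)⁻¹ < 1 by rw [inv_eq_one_div]; exact (div_lt_one (by positivity)).mpr hp1)
  obtain ⟨N, hN⟩ := h k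
  filter_upwards [eventually_ge_atTop N] with m hm
  calc ‖c m‖ ≤ (p : ℝ) ^ (-(k : ℤ)) := (pk_dvd_iff k _).mp (hN m hm)
    _ = ((p : ℝ)⁻¹) ^ k := by rw [zpow_neg, zpow_natCast, inv_pow]
    _ < ε := hk


private lemma dvd_tsum {c : ℕ → ℤ_[p]} (k : ℕ) (hc : Summable c)
    (h : ∀ m, (p : ℤ_[p]) ^ k ∣ c m) : (p : ℤ_[p]) ^ k ∣ ∑' m, c m := by
  rw [pk_dvd_iff]
  have hcl : IsClosed {x : ℤ_[p] | ‖x‖ ≤ (p : ℝ) ^ (-(k : ℤ))} :=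
    isClosed_le continuous_norm continuous_const
  refine hcl.mem_of_tendsto hc.hasSum (Filter.Eventually.of_forall fun s => ?_)
  exact IsUltrametricDist.norm_sum_le_of_forall_le_of_nonneg (by positivity)
    (fun i _ => (pk_dvd_iff k _).mp (h i))


private lemma dvd_mul_left_entries {d : ℤ_[p]} {B : 𝔸} (hB : ∀ i j, d ∣ B i j) (Y : 𝔸)
    (i j : Fin n) : d ∣ (Y * B) i j := by
  rw [Matrix.mul_apply]; exact Finset.dvd_sum fun a _ => (hB a j).mul_left _

private lemma dvd_mul_right_entries {d : ℤ_[p]} {B : 𝔸} (hB : ∀ i j, d ∣ B i j) (Y : 𝔸)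
    (i j : Fin n) : d ∣ (B * Y) i j := by
  rw [Matrix.mul_apply]; exact Finset.dvd_sum fun a _ => (hB i a).mul_right _

/-- coefficients tend to zero p-adically -/
def Dec (c : ℕ → 𝔸) : Prop := ∀ k : ℕ, ∃ N, ∀ l ≥ N, ∀ i j, (p : ℤ_[p]) ^ k ∣ c l i j

private lemma Dec.summable {c : ℕ → 𝔸} (hc : Dec c) (i j : Fin n) :
    Summable fun m => c m i j :=
  summable_of_decay fun k => (hc k).imp fun _ hN m hm => hN m hm i j

/-- the sequence of quotient coefficients for division by `C X + X` -/
noncomputable def qtl (X : 𝔸) (c : ℕ → 𝔸) (j : ℕ) : 𝔸 :=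
  Matrix.of fun i j' => ∑' m : ℕ, ((-X) ^ m * c (j + 1 + m)) i j'

private lemma Dec.tailterm {c : ℕ → 𝔸} (hc : Dec c) (X : 𝔸) (j : ℕ) :
    Dec fun m => (-X) ^ m * c (j + 1 + m) := fun k => by
  obtain ⟨N, hN⟩ := hc k
  exact ⟨N, fun m hm i j' => dvd_mul_left_entries (fun a b => hN _ (by omega) a b) _ i j'⟩

private lemma Dec.qtl {c : ℕ → 𝔸} (hc : Dec c) (X : 𝔸) : Dec (qtl X c) := fun k => by
  obtain ⟨N, hN⟩ := hc k
  refine ⟨N, fun j _ i j' => ?_⟩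
  show (p : ℤ_[p]) ^ k ∣ ∑' m : ℕ, ((-X) ^ m * c (j + 1 + m)) i j'
  exact dvd_tsum k ((hc.tailterm X j).summable i j')
    fun m => dvd_mul_left_entries (fun a b => hN _ (by omega) a b) _ i j'

private lemma qtl_succ {c : ℕ → 𝔸} (hc : Dec c) (X : 𝔸) (j : ℕ) :
    qtl X c j = c (j + 1) - X * qtl X c (j + 1) := by
  have hsum : ∀ (j0 : ℕ) (a b : Fin n), Summable fun m => ((-X) ^ m * c (j0 + 1 + m)) a b :=
    fun j0 a b => (hc.tailterm X j0).summable a b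
  ext i j'
  show (∑' m : ℕ, ((-X) ^ m * c (j + 1 + m)) i j') = _
  rw [Summable.tsum_eq_zero_add (hsum j i j')]
  have key : ∀ m : ℕ, ((-X) ^ (m + 1) * c (j + 1 + (m + 1))) i j'
      = ∑ a, -(X i a * (((-X) ^ m * c (j + 1 + 1 + m)) a j')) := by
    intro m
    have h1 : (-X) ^ (m + 1) * c (j + 1 + (m + 1))
        = -(X * ((-X) ^ m * c (j + 1 + 1 + m))) := by
      rw [show j + 1 + (m + 1) = j + 1 + 1 + m by omega, pow_succ', mul_assoc, neg_mul]
    rw [h1, Matrix.neg_apply, Matrix.mul_apply, ← Finset.sum_neg_distrib]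
  rw [tsum_congr key,
    Summable.tsum_finsetSum (fun a _ => ((hsum (j + 1) a j').mul_left (X i a)).neg)]
  have key2 : ∀ a : Fin n, (∑' m : ℕ, -(X i a * (((-X) ^ m * c (j + 1 + 1 + m)) a j')))
      = -(X i a * Stmt18.qtl X c (j + 1) a j') := by
    intro a
    rw [tsum_neg, (hsum (j + 1) a j').tsum_mul_left]
    rfl
  rw [Finset.sum_congr rfl fun a _ => key2 a]
  simp only [pow_zero, add_zero, Matrix.sub_apply, Matrix.mul_apply, Matrix.neg_apply,
    sub_eq_add_neg, ← Finset.sum_neg_distrib, Matrix.one_apply, ite_mul, one_mul, zero_mul,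
    Finset.sum_ite_eq, Finset.mem_univ, if_pos]

noncomputable def qstep (X : 𝔸) (c : ℕ → 𝔸) : PowerSeries 𝔸 := PowerSeries.mk (qtl X c)

noncomputable def rstep (X : 𝔸) (c : ℕ → 𝔸) : 𝔸 := c 0 - X * qtl X c 0

private lemma step_div {c : ℕ → 𝔸} (hc : Dec c) (X : 𝔸) :
    PowerSeries.mk c =
      (PowerSeries.C X + PowerSeries.X) * qstep X c + PowerSeries.C (rstep X c) := by
  refine PowerSeries.ext fun l => ?_
  rcases l with _ | m
  · simp only [PowerSeries.coeff_zero_eq_constantCoeff, map_add, map_mul,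
      PowerSeries.constantCoeff_C, PowerSeries.constantCoeff_X, add_zero, qstep,
      PowerSeries.constantCoeff_mk, rstep]
    abel
  · rw [PowerSeries.coeff_mk, map_add, add_mul, map_add, PowerSeries.coeff_C_mul,
      PowerSeries.coeff_succ_X_mul, PowerSeries.coeff_C, if_neg (Nat.succ_ne_zero m)]
    simp only [qstep, PowerSeries.coeff_mk]
    rw [qtl_succ hc X m]
    abel

private lemma Dec.negS {F : PowerSeries 𝔸} (hF : Dec fun l => PowerSeries.coeff l F) :
    Dec fun l => PowerSeries.coeff l (-F) := fun k => by
  obtain ⟨N, hN⟩ := hF k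
  exact ⟨N, fun l hl i j => by
    beta_reduce
    rw [map_neg, Matrix.neg_apply]; exact (hN l hl i j).neg_right⟩

private lemma Dec.mulS {F G : PowerSeries 𝔸} (hF : Dec fun l => PowerSeries.coeff l F)
    (hG : Dec fun l => PowerSeries.coeff l G) :
    Dec fun l => PowerSeries.coeff l (F * G) := fun k => by
  obtain ⟨Na, hNa⟩ := hF k
  obtain ⟨Nb, hNb⟩ := hG k
  refine ⟨Na + Nb, fun l hl i j => ?_⟩
  beta_reduce
  rw [PowerSeries.coeff_mul, Matrix.sum_apply]
  refine Finset.dvd_sum fun x hx => ?_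
  have hx' : x.1 + x.2 = l := Finset.HasAntidiagonal.mem_antidiagonal.mp hx
  rcases le_or_gt Na x.1 with h1 | h1
  · exact dvd_mul_right_entries (fun a b => hNa x.1 h1 a b) _ i j
  · exact dvd_mul_left_entries (fun a b => hNb x.2 (by omega) a b) _ i j

private lemma dec_X_pow (d : ℕ) : Dec fun l => PowerSeries.coeff l (PowerSeries.X ^ d : PowerSeries 𝔸) :=
  fun k => ⟨d + 1, fun l hl i j => by
    beta_reduce
    rw [PowerSeries.coeff_X_pow, if_neg (by omega)]
    exact (dvd_zero _).trans (by simp [Matrix.zero_apply])⟩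

/-- the iteration: divide, multiply the error by `t^2 M`, repeat -/
noncomputable def iter (X : 𝔸) (M f : PowerSeries 𝔸) : ℕ → PowerSeries 𝔸
  | 0 => f
  | s + 1 => -(PowerSeries.X ^ 2 * M *
      qstep X fun l => PowerSeries.coeff l (iter X M f s))

private lemma Dec.qstepS {c : ℕ → 𝔸} (hc : Dec c) (X : 𝔸) :
    Dec fun l => PowerSeries.coeff l (qstep X c) := fun k => by
  obtain ⟨N, hN⟩ := hc.qtl X k
  exact ⟨N, fun l hl i j => by
    simpa only [qstep, PowerSeries.coeff_mk] using hN l hl i j⟩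

private lemma dec_iter (X : 𝔸) {M f : PowerSeries 𝔸}
    (hM : Dec fun l => PowerSeries.coeff l M)
    (hf : Dec fun l => PowerSeries.coeff l f) :
    ∀ s, Dec fun l => PowerSeries.coeff l (iter X M f s)
  | 0 => hf
  | s + 1 => (((dec_X_pow 2).mulS hM).mulS ((dec_iter X hM hf s).qstepS X)).negS


private lemma summable_geom (x : ℕ → ℤ_[p]) : Summable fun s => (p : ℤ_[p]) ^ s * x s :=
  summable_of_decay fun k => ⟨k, fun _ hm => (pow_dvd_pow _ hm).mul_right _⟩

set_option maxHeartbeats 1000000 in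
private lemma tsum_sub_partial (x : ℕ → ℤ_[p]) (k : ℕ) :
    (p : ℤ_[p]) ^ k ∣ (∑' s, (p : ℤ_[p]) ^ s * x s) - ∑ s ∈ Finset.range k, (p : ℤ_[p]) ^ s * x s := by
  have h := Summable.sum_add_tsum_nat_add (f := fun s => (p : ℤ_[p]) ^ s * x s) k (summable_geom x)
  rw [← h, add_sub_cancel_left]
  exact dvd_tsum k ((summable_nat_add_iff k).mpr (summable_geom x))
    fun s => (pow_dvd_pow _ (Nat.le_add_left k s)).mul_right _

private lemma cast_pow_mul_apply (s : ℕ) (Y : 𝔸) (i j : Fin n) :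
    (((p : 𝔸) ^ s) * Y) i j = (p : ℤ_[p]) ^ s * Y i j := by
  rw [show (p : 𝔸) ^ s = ((p ^ s : ℕ) : 𝔸) from (Nat.cast_pow p s).symm,
    ← nsmul_eq_mul, Matrix.smul_apply, nsmul_eq_mul, Nat.cast_pow]

private lemma dvd_coeff_mul_right {d : ℤ_[p]} {G H : PowerSeries 𝔸}
    (h : ∀ l i j, d ∣ (PowerSeries.coeff l H) i j) (l : ℕ) (i j : Fin n) :
    d ∣ (PowerSeries.coeff l (G * H)) i j := by
  rw [PowerSeries.coeff_mul, Matrix.sum_apply]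
  exact Finset.dvd_sum fun x _ => dvd_mul_left_entries (h x.2) _ i j

private lemma coeff_pcast_pow_mul (s l : ℕ) (F : PowerSeries 𝔸) :
    PowerSeries.coeff l ((p : PowerSeries 𝔸) ^ s * F)
      = (p : 𝔸) ^ s * PowerSeries.coeff l F := by
  rw [show ((p : PowerSeries 𝔸)) ^ s = PowerSeries.C ((p : 𝔸) ^ s) by
    rw [map_pow, map_natCast], PowerSeries.coeff_C_mul]

/-- quotient at stage `s` -/
noncomputable def Qseq (X : 𝔸) (M f : PowerSeries 𝔸) (s : ℕ) : PowerSeries 𝔸 :=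
  qstep X fun m => PowerSeries.coeff m (iter X M f s)

/-- remainder at stage `s` -/
noncomputable def Rseq (X : 𝔸) (M f : PowerSeries 𝔸) (s : ℕ) : 𝔸 :=
  rstep X fun m => PowerSeries.coeff m (iter X M f s)

private lemma dec_Qseq (X : 𝔸) {M f : PowerSeries 𝔸}
    (hM : Dec fun l => PowerSeries.coeff l M)
    (hf : Dec fun l => PowerSeries.coeff l f) (s : ℕ) :
    Dec fun l => PowerSeries.coeff l (Qseq X M f s) :=
  (dec_iter X hM hf s).qstepS X

private lemma partial_identity (X : 𝔸) {M f : PowerSeries 𝔸}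
    (hM : Dec fun l => PowerSeries.coeff l M)
    (hf : Dec fun l => PowerSeries.coeff l f) (k : ℕ) :
    f = (PowerSeries.C X + PowerSeries.X + (p : PowerSeries 𝔸) * PowerSeries.X ^ 2 * M) *
          (∑ s ∈ Finset.range k, (p : PowerSeries 𝔸) ^ s * Qseq X M f s) +
        PowerSeries.C (∑ s ∈ Finset.range k, (p : 𝔸) ^ s * Rseq X M f s) +
        (p : PowerSeries 𝔸) ^ k * iter X M f k := by
  simp only [Qseq, Rseq]
  set g : PowerSeries 𝔸 :=
    PowerSeries.C X + PowerSeries.X + (p : PowerSeries 𝔸) * PowerSeries.X ^ 2 * M with hg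
  induction k with
  | zero => simp [iter]
  | succ k ih =>
    set Q : PowerSeries 𝔸 := qstep X fun m => PowerSeries.coeff m (iter X M f k) with hQ
    set r : 𝔸 := rstep X fun m => PowerSeries.coeff m (iter X M f k) with hr
    have hmk : PowerSeries.mk (fun m => PowerSeries.coeff m (iter X M f k)) = iter X M f k :=
      PowerSeries.ext fun l => by rw [PowerSeries.coeff_mk]
    have h2 : iter X M f k = (PowerSeries.C X + PowerSeries.X) * Q + PowerSeries.C r := by
      rw [← hmk]; exact step_div (dec_iter X hM hf k) X
    have hassoc : ((p : PowerSeries 𝔸) * PowerSeries.X ^ 2 * M) * Q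
        = (p : PowerSeries 𝔸) * (PowerSeries.X ^ 2 * M * Q) := by
      simp only [mul_assoc]
    have hstep : iter X M f k = g * Q + PowerSeries.C r + (p : PowerSeries 𝔸) * iter X M f (k + 1) := by
      rw [show iter X M f (k + 1) = -(PowerSeries.X ^ 2 * M * Q) from rfl, hg, add_mul,
        mul_neg, hassoc, h2]
      abel
    have hcomm : ∀ (F G : PowerSeries 𝔸) (s : ℕ),
        (p : PowerSeries 𝔸) ^ s * (F * G) = F * ((p : PowerSeries 𝔸) ^ s * G) := fun F G s => by
      rw [← mul_assoc, ((Nat.cast_commute p F).pow_left s).eq, mul_assoc]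
    rw [Finset.sum_range_succ, Finset.sum_range_succ]
    conv_lhs => rw [ih, hstep]
    have e1 : g * ((∑ s ∈ Finset.range k, (p : PowerSeries 𝔸) ^ s *
            qstep X fun m => PowerSeries.coeff m (iter X M f s)) + (p : PowerSeries 𝔸) ^ k * Q)
        = g * (∑ s ∈ Finset.range k, (p : PowerSeries 𝔸) ^ s *
            qstep X fun m => PowerSeries.coeff m (iter X M f s)) +
          (p : PowerSeries 𝔸) ^ k * (g * Q) := by
      rw [mul_add, hcomm]
    have e2 : PowerSeries.C ((∑ s ∈ Finset.range k, (p : 𝔸) ^ s *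
            rstep X fun m => PowerSeries.coeff m (iter X M f s)) + (p : 𝔸) ^ k * r)
        = PowerSeries.C (∑ s ∈ Finset.range k, (p : 𝔸) ^ s *
            rstep X fun m => PowerSeries.coeff m (iter X M f s)) +
          (p : PowerSeries 𝔸) ^ k * PowerSeries.C r := by
      rw [map_add, map_mul, map_pow, map_natCast]
    have e3 : (p : PowerSeries 𝔸) ^ (k + 1) * iter X M f (k + 1)
        = (p : PowerSeries 𝔸) ^ k * ((p : PowerSeries 𝔸) * iter X M f (k + 1)) := by
      rw [pow_succ, mul_assoc]
    rw [e1, e2, e3, mul_add, mul_add]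
    abel



/-- the full quotient -/
noncomputable def qfull (X : 𝔸) (M f : PowerSeries 𝔸) : PowerSeries 𝔸 :=
  PowerSeries.mk fun l => Matrix.of fun i j =>
    ∑' s : ℕ, (p : ℤ_[p]) ^ s * (PowerSeries.coeff l (Qseq X M f s)) i j

/-- the full remainder -/
noncomputable def rfull (X : 𝔸) (M f : PowerSeries 𝔸) : 𝔸 :=
  Matrix.of fun i j => ∑' s : ℕ, (p : ℤ_[p]) ^ s * (Rseq X M f s) i j

private lemma coeff_qfull_apply (X : 𝔸) (M f : PowerSeries 𝔸) (l : ℕ) (i j : Fin n) :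
    (PowerSeries.coeff l (qfull X M f)) i j
      = ∑' s : ℕ, (p : ℤ_[p]) ^ s * (PowerSeries.coeff l (Qseq X M f s)) i j := by
  rw [qfull, PowerSeries.coeff_mk, Matrix.of_apply]

private lemma dvd_tsum_of_partial {x : ℕ → ℤ_[p]} {k : ℕ}
    (h : ∀ s < k, (p : ℤ_[p]) ^ k ∣ (p : ℤ_[p]) ^ s * x s) :
    (p : ℤ_[p]) ^ k ∣ ∑' s, (p : ℤ_[p]) ^ s * x s := by
  have h2 : (p : ℤ_[p]) ^ k ∣ ∑ s ∈ Finset.range k, (p : ℤ_[p]) ^ s * x s :=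
    Finset.dvd_sum fun s hs => h s (Finset.mem_range.mp hs)
  calc (p : ℤ_[p]) ^ k
      ∣ ((∑' s, (p : ℤ_[p]) ^ s * x s) - ∑ s ∈ Finset.range k, (p : ℤ_[p]) ^ s * x s)
        + ∑ s ∈ Finset.range k, (p : ℤ_[p]) ^ s * x s :=
        dvd_add (tsum_sub_partial x k) h2
    _ = ∑' s, (p : ℤ_[p]) ^ s * x s := by ring

private lemma dec_qfull (X : 𝔸) {M f : PowerSeries 𝔸}
    (hM : Dec fun l => PowerSeries.coeff l M)
    (hf : Dec fun l => PowerSeries.coeff l f) :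
    Dec fun l => PowerSeries.coeff l (qfull X M f) := by
  intro k
  choose N hN using fun s => dec_Qseq X hM hf s k
  refine ⟨(Finset.range k).sup N, fun l hl i j => ?_⟩
  beta_reduce
  rw [coeff_qfull_apply]
  exact dvd_tsum_of_partial fun s hs =>
    (hN s l (le_trans (Finset.le_sup (Finset.mem_range.mpr hs)) hl) i j).mul_left _

private lemma key_dvd (X : 𝔸) {M f : PowerSeries 𝔸}
    (hM : Dec fun l => PowerSeries.coeff l M)
    (hf : Dec fun l => PowerSeries.coeff l f) (k l : ℕ) (i j : Fin n) :
    (p : ℤ_[p]) ^ k ∣ (PowerSeries.coeff l (f -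
      ((PowerSeries.C X + PowerSeries.X + (p : PowerSeries 𝔸) * PowerSeries.X ^ 2 * M) *
        qfull X M f + PowerSeries.C (rfull X M f))) : 𝔸) i j := by
  have hpart := partial_identity X hM hf k
  have hrearr : f - ((PowerSeries.C X + PowerSeries.X +
        (p : PowerSeries 𝔸) * PowerSeries.X ^ 2 * M) * qfull X M f +
        PowerSeries.C (rfull X M f))
      = (PowerSeries.C X + PowerSeries.X + (p : PowerSeries 𝔸) * PowerSeries.X ^ 2 * M) *
          ((∑ s ∈ Finset.range k, (p : PowerSeries 𝔸) ^ s * Qseq X M f s) - qfull X M f) +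
        PowerSeries.C ((∑ s ∈ Finset.range k, (p : 𝔸) ^ s * Rseq X M f s) - rfull X M f) +
        (p : PowerSeries 𝔸) ^ k * iter X M f k := by
    nth_rewrite 1 [hpart]
    rw [map_sub, mul_sub]
    abel
  rw [hrearr, map_add, map_add, Matrix.add_apply, Matrix.add_apply]
  have hQtail : ∀ l' (i' j' : Fin n), (p : ℤ_[p]) ^ k ∣ (PowerSeries.coeff l'
      ((∑ s ∈ Finset.range k, (p : PowerSeries 𝔸) ^ s * Qseq X M f s) - qfull X M f)) i' j' := by
    intro l' i' j'
    rw [map_sub, Matrix.sub_apply]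
    have h1 : (PowerSeries.coeff l' (∑ s ∈ Finset.range k, (p : PowerSeries 𝔸) ^ s * Qseq X M f s)) i' j'
        = ∑ s ∈ Finset.range k, (p : ℤ_[p]) ^ s * (PowerSeries.coeff l' (Qseq X M f s)) i' j' := by
      rw [map_sum, Matrix.sum_apply]
      exact Finset.sum_congr rfl fun s _ => by rw [coeff_pcast_pow_mul, cast_pow_mul_apply]
    rw [h1, coeff_qfull_apply, ← neg_sub]
    exact dvd_neg.mpr (tsum_sub_partial _ k)
  refine dvd_add (dvd_add ?_ ?_) ?_
  · exact dvd_coeff_mul_right hQtail l i j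
  · rw [PowerSeries.coeff_C]
    by_cases hl0 : l = 0
    · rw [if_pos hl0, Matrix.sub_apply]
      have h1 : (∑ s ∈ Finset.range k, (p : 𝔸) ^ s * Rseq X M f s) i j
          = ∑ s ∈ Finset.range k, (p : ℤ_[p]) ^ s * (Rseq X M f s) i j := by
        rw [Matrix.sum_apply]
        exact Finset.sum_congr rfl fun s _ => by rw [cast_pow_mul_apply]
      have h2 : rfull X M f i j = ∑' s : ℕ, (p : ℤ_[p]) ^ s * (Rseq X M f s) i j := by
        rw [rfull, Matrix.of_apply]
      rw [h1, h2, ← neg_sub]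
      exact dvd_neg.mpr (tsum_sub_partial _ k)
    · rw [if_neg hl0, Matrix.zero_apply]
      exact dvd_zero _
  · rw [coeff_pcast_pow_mul, cast_pow_mul_apply]
    exact dvd_mul_right _ _

private lemma main (X : 𝔸) {M f : PowerSeries 𝔸}
    (hM : Dec fun l => PowerSeries.coeff l M)
    (hf : Dec fun l => PowerSeries.coeff l f) :
    ∃ (q : PowerSeries 𝔸) (r : 𝔸), (Dec fun l => PowerSeries.coeff l q) ∧
      f = (PowerSeries.C X + PowerSeries.X +
            (p : PowerSeries 𝔸) * PowerSeries.X ^ 2 * M) * q + PowerSeries.C r := by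
  refine ⟨qfull X M f, rfull X M f, dec_qfull X hM hf, ?_⟩
  rw [← sub_eq_zero]
  refine PowerSeries.ext fun l => ?_
  refine Matrix.ext fun i j => ?_
  rw [map_zero, Matrix.zero_apply]
  exact zero_of_forall_dvd fun k => key_dvd X hM hf k l i j

end Stmt18

/-- Division lemma in the noncommutative setting. Let
`A = M_n(ℤ_p)`, `Â[t]` the ring of power series over `A` with coefficients tending to
`0` `p`-adically, `X ∈ A`, and `M(t) ∈ Â[t]`. Set `g(t) = X + I_n t + p t² M(t)`.
Then for every `f(t) ∈ Â[t]` there exist `q(t) ∈ Â[t]` and `r ∈ A` with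
`f(t) = g(t)·q(t) + r`. -/
theorem stmt_18 (p n : ℕ) [Fact p.Prime]
    (X : Matrix (Fin n) (Fin n) ℤ_[p])
    (M : PowerSeries (Matrix (Fin n) (Fin n) ℤ_[p])) (hM : MemAhat p n M)
    (f : PowerSeries (Matrix (Fin n) (Fin n) ℤ_[p])) (hf : MemAhat p n f) :
    ∃ (q : PowerSeries (Matrix (Fin n) (Fin n) ℤ_[p])) (r : Matrix (Fin n) (Fin n) ℤ_[p]),
      MemAhat p n q ∧
      f = (PowerSeries.C X + PowerSeries.X +
            (p : PowerSeries (Matrix (Fin n) (Fin n) ℤ_[p])) * PowerSeries.X ^ 2 * M) * q +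
          PowerSeries.C r := by
  obtain ⟨q, r, hq, heq⟩ := Stmt18.main X (fun k => hM k) (fun k => hf k)
  exact ⟨q, r, fun k => hq k, heq⟩
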